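/- Under the homotopy CGM with additively inexact linear minimization oracle of accuracy parameter δ ≥ 0, for every k ≥ 1 the iterate x_{k+1} satisfies the smoothed-gap bound F_{β_k}(x_{k+1}) − F⋆ ≤ 2 D² ( L_f/(k+1) + ‖A‖²/(β₀ √(k+1)) ) (1 + δ). -/

import Mathlib

set_option maxHeartbeats 1000000
set_option linter.unusedSectionVars false
set_option linter.unusedVariables false
open RealInnerProductSpace Filter

section FLemmas
variable {E : Type*} [NormedAddCommGroup E] [InnerProductSpace ℝ E] [CompleteSpace E]

theorem cvx_grad_ineq (f : E → ℝ) (hf : ConvexOn ℝ Set.univ f) (p y : E) (g : E)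
    (hg : HasGradientAt f g p) : f p + ⟪g, y - p⟫ ≤ f y := by
  set d := y - p with hd
  have hc : HasDerivAt (fun t : ℝ => p + t • d) d 0 := by
    simpa using ((hasDerivAt_id (0:ℝ)).smul_const d).const_add p
  have hφ : HasDerivAt (fun t : ℝ => f (p + t • d)) ⟪g, d⟫ 0 := by
    have h0 : HasFDerivAt f ((InnerProductSpace.toDual ℝ E) g) (p + (0:ℝ) • d) := by
      simpa using hasGradientAt_iff_hasFDerivAt.mp hg
    have := h0.comp_hasDerivAt 0 hc
    simp [InnerProductSpace.toDual] at this
    exact this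
  have hslope : Tendsto (fun t : ℝ => (f (p + t • d) - f p) / t) (nhdsWithin 0 (Set.Ioi 0)) (nhds ⟪g, d⟫) := by
    have := hasDerivAt_iff_tendsto_slope.mp hφ
    have h2 : Tendsto (slope (fun t : ℝ => f (p + t • d)) 0) (nhdsWithin 0 (Set.Ioi 0)) (nhds ⟪g, d⟫) :=
      this.mono_left (nhdsWithin_mono 0 (by intro t ht; exact ne_of_gt ht))
    refine h2.congr' ?_
    filter_upwards [self_mem_nhdsWithin] with t ht
    simp [slope, sub_zero, div_eq_inv_mul]
  have hle : ∀ᶠ t in nhdsWithin (0:ℝ) (Set.Ioi 0), (f (p + t • d) - f p) / t ≤ f y - f p := by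
    filter_upwards [Ioo_mem_nhdsGT_of_mem (by norm_num : (0:ℝ) ∈ Set.Ico 0 1)] with t ht
    obtain ⟨ht0, ht1⟩ := ht
    have hcvx := hf.2 (Set.mem_univ y) (Set.mem_univ p)
      (show (0:ℝ) ≤ t by linarith) (show (0:ℝ) ≤ 1 - t by linarith)
      (show t + (1 - t) = 1 by ring)
    have he : t • y + (1 - t) • p = p + t • d := by rw [hd]; module
    rw [he] at hcvx
    rw [div_le_iff₀ ht0]
    simp only [smul_eq_mul] at hcvx
    nlinarith
  have := le_of_tendsto hslope hle
  linarith


theorem descent_lemma (f : E → ℝ) (f' : E → E) (hf : ∀ x, HasGradientAt f (f' x) x)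
    (L : ℝ) (hL : 0 ≤ L) (hlip : ∀ x y, ‖f' x - f' y‖ ≤ L * ‖x - y‖) (p y : E) :
    f y ≤ f p + ⟪f' p, y - p⟫ + L / 2 * ‖y - p‖ ^ 2 := by
  set d := y - p with hd
  have hcurve : ∀ t : ℝ, HasDerivAt (fun t : ℝ => p + t • d) d t := fun t => by
    simpa using ((hasDerivAt_id t).smul_const d).const_add p
  have hφ : ∀ t : ℝ, HasDerivAt (fun t : ℝ => f (p + t • d)) ⟪f' (p + t • d), d⟫ t := by
    intro t
    have h0 : HasFDerivAt f ((InnerProductSpace.toDual ℝ E) (f' (p + t • d))) (p + t • d) :=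
      hasGradientAt_iff_hasFDerivAt.mp (hf _)
    have := h0.comp_hasDerivAt t (hcurve t)
    simp [InnerProductSpace.toDual] at this
    exact this
  have hf'cont : Continuous f' := by
    refine (LipschitzWith.of_dist_le_mul (K := Real.toNNReal L) ?_).continuous
    intro a b
    rw [dist_eq_norm, dist_eq_norm, Real.coe_toNNReal _ hL]
    exact hlip a b
  have hcont : Continuous (fun t : ℝ => ⟪f' (p + t • d), d⟫) := by
    exact (hf'cont.comp (by continuity)).inner continuous_const
  have hftc : ∫ t in (0:ℝ)..1, ⟪f' (p + t • d), d⟫ = f (p + (1:ℝ) • d) - f (p + (0:ℝ) • d) := by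
    exact intervalIntegral.integral_eq_sub_of_hasDerivAt (fun t _ => hφ t)
      (hcont.intervalIntegrable 0 1)
  have hmono : ∫ t in (0:ℝ)..1, ⟪f' (p + t • d), d⟫ ≤
      ∫ t in (0:ℝ)..1, (⟪f' p, d⟫ + L * t * ‖d‖ ^ 2) := by
    apply intervalIntegral.integral_mono_on (by norm_num) (hcont.intervalIntegrable 0 1)
      ((by continuity : Continuous fun t : ℝ => ⟪f' p, d⟫ + L * t * ‖d‖^2).intervalIntegrable 0 1)
    intro t ht
    have h1 : ⟪f' (p + t • d) - f' p, d⟫ ≤ ‖f' (p + t • d) - f' p‖ * ‖d‖ :=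
      real_inner_le_norm _ _
    have h2 : ‖f' (p + t • d) - f' p‖ ≤ L * (t * ‖d‖) := by
      have := hlip (p + t • d) p
      simpa [norm_smul, abs_of_nonneg ht.1] using this
    have h3 : ‖f' (p + t • d) - f' p‖ * ‖d‖ ≤ L * (t * ‖d‖) * ‖d‖ :=
      mul_le_mul_of_nonneg_right h2 (norm_nonneg _)
    have h4 : ⟪f' (p + t • d), d⟫ - ⟪f' p, d⟫ = ⟪f' (p + t • d) - f' p, d⟫ := by
      rw [inner_sub_left]
    nlinarith [h1, h3]
  have hint : ∫ t in (0:ℝ)..1, (⟪f' p, d⟫ + L * t * ‖d‖ ^ 2) = ⟪f' p, d⟫ + L / 2 * ‖d‖ ^ 2 := by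
    have e1 : (fun t : ℝ => ⟪f' p, d⟫ + L * t * ‖d‖ ^ 2)
        = fun t : ℝ => ⟪f' p, d⟫ + (L * ‖d‖ ^ 2) * t := by
      funext t; ring
    rw [e1, intervalIntegral.integral_add intervalIntegrable_const
      (show IntervalIntegrable (fun t : ℝ => L * ‖d‖ ^ 2 * t) MeasureTheory.volume 0 1 from
        (continuous_const.mul continuous_id').intervalIntegrable 0 1),
      intervalIntegral.integral_const, intervalIntegral.integral_const_mul, integral_id]
    simp; ring
  have hy : p + (1:ℝ) • d = y := by rw [hd]; module
  have h0 : p + (0:ℝ) • d = p := by simp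
  rw [hy, h0] at hftc
  linarith [hftc ▸ (hmono.trans_eq hint)]

end FLemmas

section MoreauL
variable {G : Type*} [NormedAddCommGroup G] [InnerProductSpace ℝ G]

section Moreau
variable (g : G → ℝ) (β : ℝ) (hβ : 0 < β) (z q : G)
  (hq : ∀ y, g q + ‖z - q‖ ^ 2 / (2 * β) ≤ g y + ‖z - y‖ ^ 2 / (2 * β))

include hq in
theorem moreau_bdd : BddBelow (Set.range fun y => g y + ‖z - y‖ ^ 2 / (2 * β)) :=
  ⟨g q + ‖z - q‖ ^ 2 / (2 * β), by rintro _ ⟨y, rfl⟩; exact hq y⟩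

include hq in
theorem moreau_eq : (⨅ y : G, (g y + ‖z - y‖ ^ 2 / (2 * β))) = g q + ‖z - q‖ ^ 2 / (2 * β) :=
  le_antisymm (ciInf_le (moreau_bdd g β z q hq) q) (le_ciInf hq)

include hq in
theorem moreau_le (y : G) :
    (⨅ y : G, (g y + ‖z - y‖ ^ 2 / (2 * β))) ≤ g y + ‖z - y‖ ^ 2 / (2 * β) :=
  ciInf_le (moreau_bdd g β z q hq) y

include hβ hq in
theorem moreau_smooth (y' q' : G)
    (hq' : ∀ y, g q' + ‖y' - q'‖ ^ 2 / (2 * β) ≤ g y + ‖y' - y‖ ^ 2 / (2 * β)) :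
    (⨅ y : G, (g y + ‖y' - y‖ ^ 2 / (2 * β)))
      ≤ (⨅ y : G, (g y + ‖z - y‖ ^ 2 / (2 * β)))
        + ⟪(β⁻¹) • (z - q), y' - z⟫ + ‖y' - z‖ ^ 2 / (2 * β) := by
  have h1 : (⨅ y : G, (g y + ‖y' - y‖ ^ 2 / (2 * β))) ≤ g q + ‖y' - q‖ ^ 2 / (2 * β) :=
    ciInf_le (moreau_bdd g β y' q' hq') q
  rw [moreau_eq g β z q hq]
  have hexp : ‖y' - q‖ ^ 2 = ‖y' - z‖ ^ 2 + 2 * ⟪y' - z, z - q⟫ + ‖z - q‖ ^ 2 := by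
    have : y' - q = (y' - z) + (z - q) := by abel
    rw [this, norm_add_sq_real]
  have hinner : ⟪(β⁻¹) • (z - q), y' - z⟫ = ⟪y' - z, z - q⟫ / β := by
    rw [real_inner_smul_left, real_inner_comm]; ring
  rw [hinner]
  have hβ' : β ≠ 0 := ne_of_gt hβ
  calc (⨅ y : G, (g y + ‖y' - y‖ ^ 2 / (2 * β))) ≤ g q + ‖y' - q‖ ^ 2 / (2 * β) := h1
    _ = g q + ‖z - q‖ ^ 2 / (2 * β) + ⟪y' - z, z - q⟫ / β + ‖y' - z‖ ^ 2 / (2 * β) := by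
        rw [hexp]; field_simp; ring

-- subgradient property:  u = β⁻¹ • (z - q) ∈ ∂g(q)
include hβ hq in
theorem moreau_subgrad (hg : ConvexOn ℝ Set.univ g) (w : G) :
    g q + ⟪(β⁻¹) • (z - q), w - q⟫ ≤ g w := by
  set C := ‖w - q‖ ^ 2 / (2 * β) with hC
  have hC0 : 0 ≤ C := by positivity
  have key : ∀ t : ℝ, 0 < t → t ≤ 1 → ⟪(β⁻¹) • (z - q), w - q⟫ ≤ g w - g q + t * C := by
    intro t ht0 ht1
    have hcvx := hg.2 (Set.mem_univ w) (Set.mem_univ q)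
      (show (0:ℝ) ≤ t by linarith) (show (0:ℝ) ≤ 1 - t by linarith)
      (show t + (1 - t) = 1 by ring)
    have he : t • w + (1 - t) • q = q + t • (w - q) := by module
    rw [he] at hcvx
    simp only [smul_eq_mul] at hcvx
    have hmin := hq (q + t • (w - q))
    have hexp : ‖z - (q + t • (w - q))‖ ^ 2
        = ‖z - q‖ ^ 2 - 2 * t * ⟪z - q, w - q⟫ + t ^ 2 * ‖w - q‖ ^ 2 := by
      have h0 : z - (q + t • (w - q)) = (z - q) - t • (w - q) := by abel
      rw [h0, norm_sub_sq_real, real_inner_smul_right, norm_smul]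
      simp [mul_pow, abs_of_nonneg (le_of_lt ht0)]
      ring
    rw [hexp] at hmin
    have hinner : ⟪(β⁻¹) • (z - q), w - q⟫ = ⟪z - q, w - q⟫ / β := by
      rw [real_inner_smul_left]; ring
    rw [hinner, hC]
    have hβ' : (0:ℝ) < 2 * β := by linarith
    have hmin2 : g q * (2 * β) + ‖z - q‖ ^ 2 ≤ g (q + t • (w - q)) * (2 * β)
        + (‖z - q‖ ^ 2 - 2 * t * ⟪z - q, w - q⟫ + t ^ 2 * ‖w - q‖ ^ 2) := by
      have := mul_le_mul_of_nonneg_right hmin (le_of_lt hβ')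
      field_simp at this
      linarith
    have h5 : t * (⟪z - q, w - q⟫ * 2) ≤ t * ((g w - g q) * (2 * β) + t * ‖w - q‖ ^ 2) := by
      nlinarith [hmin2, hcvx, hβ]
    have h6 := le_of_mul_le_mul_left h5 ht0
    rw [div_le_iff₀ hβ]
    have e : (g w - g q + t * (‖w - q‖ ^ 2 / (2 * β))) * β
        = (g w - g q) * β + t * ‖w - q‖ ^ 2 / 2 := by field_simp
    rw [e]; linarith [h6]
  -- take t → 0
  refine le_of_forall_pos_le_add ?_
  intro ε hε
  have ht : ∀ t : ℝ, 0 < t → t ≤ 1 → t * C ≤ ε → g q + ⟪(β⁻¹) • (z - q), w - q⟫ ≤ g w + ε := by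
    intro t h1 h2 h3
    have := key t h1 h2
    linarith
  by_cases hC' : C = 0
  · exact ht 1 one_pos le_rfl (by rw [hC']; simpa using le_of_lt hε)
  · have hCpos : 0 < C := lt_of_le_of_ne hC0 (Ne.symm hC')
    refine ht (min 1 (ε / C)) (lt_min one_pos (by positivity)) (min_le_left _ _) ?_
    calc min 1 (ε / C) * C ≤ (ε / C) * C := by
          apply mul_le_mul_of_nonneg_right (min_le_right _ _) hC0
      _ = ε := by field_simp

include hβ hq in
theorem moreau_strong_cvx (hg : ConvexOn ℝ Set.univ g) (w : G) :
    ⟪(β⁻¹) • (z - q), w - z⟫ ≤ g w - (g q + ‖z - q‖ ^ 2 / (2 * β)) - ‖z - q‖ ^ 2 / (2 * β) := by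
  have hsub := moreau_subgrad g β hβ z q hq hg w
  have h1 : ⟪(β⁻¹) • (z - q), w - q⟫
      = ⟪(β⁻¹) • (z - q), w - z⟫ + ‖z - q‖ ^ 2 / β := by
    have : w - q = (w - z) + (z - q) := by abel
    rw [this, inner_add_right, real_inner_smul_left, real_inner_smul_left,
      real_inner_self_eq_norm_sq]
    ring
  rw [h1] at hsub
  have e2 : ‖z - q‖ ^ 2 / β = ‖z - q‖ ^ 2 / (2 * β) + ‖z - q‖ ^ 2 / (2 * β) := by ring
  linarith

theorem moreau_beta_le (hg : ConvexOn ℝ Set.univ g) (γ β : ℝ) (hγ : 0 < γ) (hγβ : γ ≤ β)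
    (z qγ qβ : G)
    (hqγ : ∀ y, g qγ + ‖z - qγ‖ ^ 2 / (2 * γ) ≤ g y + ‖z - y‖ ^ 2 / (2 * γ))
    (hqβ : ∀ y, g qβ + ‖z - qβ‖ ^ 2 / (2 * β) ≤ g y + ‖z - y‖ ^ 2 / (2 * β)) :
    (⨅ y : G, (g y + ‖z - y‖ ^ 2 / (2 * γ)))
      ≤ (⨅ y : G, (g y + ‖z - y‖ ^ 2 / (2 * β))) + (β - γ) / 2 * ‖(γ⁻¹) • (z - qγ)‖ ^ 2 := by
  have hβpos : 0 < β := lt_of_lt_of_le hγ hγβ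
  rw [moreau_eq g γ z qγ hqγ, moreau_eq g β z qβ hqβ]
  set a := z - qγ with ha
  set b := z - qβ with hb
  have hsub := moreau_subgrad g γ hγ z qγ hqγ hg qβ
  have h1 : ⟪(γ⁻¹) • a, qβ - qγ⟫ = (‖a‖ ^ 2 - ⟪a, b⟫) / γ := by
    have e : qβ - qγ = a - b := by rw [ha, hb]; abel
    rw [e, real_inner_smul_left, inner_sub_right, real_inner_self_eq_norm_sq]
    ring
  rw [h1] at hsub
  have hnorm : ‖(γ⁻¹) • a‖ ^ 2 = ‖a‖ ^ 2 / γ ^ 2 := by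
    rw [norm_smul]
    rw [Real.norm_eq_abs, abs_of_pos (inv_pos.mpr hγ)]
    field_simp
  rw [hnorm]
  have hexp : 0 ≤ β ^ 2 * ‖a‖ ^ 2 - 2 * (β * γ) * ⟪a, b⟫ + γ ^ 2 * ‖b‖ ^ 2 := by
    have h2 : ‖β • a - γ • b‖ ^ 2
        = β ^ 2 * ‖a‖ ^ 2 - 2 * (β * γ) * ⟪a, b⟫ + γ ^ 2 * ‖b‖ ^ 2 := by
      rw [norm_sub_sq_real, real_inner_smul_left, real_inner_smul_right, norm_smul, norm_smul]
      rw [Real.norm_eq_abs, Real.norm_eq_abs, abs_of_pos hβpos, abs_of_pos hγ]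
      ring
    nlinarith [sq_nonneg ‖β • a - γ • b‖]
  have e : (g qβ + ‖b‖ ^ 2 / (2 * β) + (β - γ) / 2 * (‖a‖ ^ 2 / γ ^ 2))
        - (g qγ + ‖a‖ ^ 2 / (2 * γ))
      = (g qβ - (g qγ + (‖a‖ ^ 2 - ⟪a, b⟫) / γ))
        + (β ^ 2 * ‖a‖ ^ 2 - 2 * (β * γ) * ⟪a, b⟫ + γ ^ 2 * ‖b‖ ^ 2) / (2 * β * γ ^ 2) := by
    field_simp
    ring
  have h3 : 0 ≤ (g qβ + ‖b‖ ^ 2 / (2 * β) + (β - γ) / 2 * (‖a‖ ^ 2 / γ ^ 2))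
      - (g qγ + ‖a‖ ^ 2 / (2 * γ)) := by
    rw [e]
    have := div_nonneg hexp (by positivity : (0:ℝ) ≤ 2 * β * γ ^ 2)
    linarith
  linarith

end Moreau

end MoreauL


section Step
variable {E : Type*} [NormedAddCommGroup E] [InnerProductSpace ℝ E] [CompleteSpace E]
variable {G : Type*} [NormedAddCommGroup G] [InnerProductSpace ℝ G] [CompleteSpace G]

theorem cgm_step
    (f : E → ℝ) (f' : E → E)
    (hf_cvx : ConvexOn ℝ Set.univ f) (hf_grad : ∀ x, HasGradientAt f (f' x) x)
    (L_f : ℝ) (hLf : 0 ≤ L_f) (hf'_lip : ∀ x y, ‖f' x - f' y‖ ≤ L_f * ‖x - y‖)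
    (A : E →L[ℝ] G) (g : G → ℝ) (hg_cvx : ConvexOn ℝ Set.univ g)
    (β η δ D : ℝ) (hβ : 0 < β) (hη : 0 ≤ η) (hη1 : η ≤ 1) (hδ : 0 ≤ δ) (hD : 0 ≤ D)
    (xk sk xstar : E) (q q2 : G)
    (hq : ∀ y, g q + ‖A xk - q‖ ^ 2 / (2 * β) ≤ g y + ‖A xk - y‖ ^ 2 / (2 * β))
    (hq2 : ∀ y, g q2 + ‖A (xk + η • (sk - xk)) - q2‖ ^ 2 / (2 * β)
        ≤ g y + ‖A (xk + η • (sk - xk)) - y‖ ^ 2 / (2 * β))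
    (hns : ‖sk - xk‖ ≤ D) (hnstar : ‖xstar - xk‖ ≤ D)
    (hlmo : ⟪β • f' xk + (ContinuousLinearMap.adjoint A) (A xk - q), sk⟫
        ≤ ⟪β • f' xk + (ContinuousLinearMap.adjoint A) (A xk - q), xstar⟫
          + δ * (η * β / 2) * D ^ 2 * (L_f + ‖A‖ ^ 2 / β)) :
    f (xk + η • (sk - xk))
        + (⨅ y : G, (g y + ‖A (xk + η • (sk - xk)) - y‖ ^ 2 / (2 * β)))
        - (f xstar + g (A xstar))
      ≤ (1 - η) * (f xk + (⨅ y : G, (g y + ‖A xk - y‖ ^ 2 / (2 * β)))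
            - (f xstar + g (A xstar)))
        - η * β * ‖(β⁻¹) • (A xk - q)‖ ^ 2 / 2
        + η ^ 2 * D ^ 2 * (L_f + ‖A‖ ^ 2 / β) * (1 + δ) / 2 := by
  set d := sk - xk with hd
  set xk1 := xk + η • d with hxk1
  set u := (β⁻¹) • (A xk - q) with hu
  set env := (⨅ y : G, (g y + ‖A xk - y‖ ^ 2 / (2 * β))) with henv
  set env1 := (⨅ y : G, (g y + ‖A xk1 - y‖ ^ 2 / (2 * β))) with henv1
  set L := L_f + ‖A‖ ^ 2 / β with hL
  have hLpos : 0 ≤ L := by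
    have : 0 ≤ ‖A‖ ^ 2 / β := by positivity
    rw [hL]; linarith
  -- descent for f
  have h1 : f xk1 ≤ f xk + η * ⟪f' xk, d⟫ + L_f / 2 * (η ^ 2 * ‖d‖ ^ 2) := by
    have := descent_lemma f f' hf_grad L_f hLf hf'_lip xk xk1
    have e1 : xk1 - xk = η • d := by rw [hxk1]; abel
    rw [e1, real_inner_smul_right, norm_smul] at this
    calc f xk1 ≤ f xk + η * ⟪f' xk, d⟫ + L_f / 2 * (‖η‖ * ‖d‖) ^ 2 := this
      _ = f xk + η * ⟪f' xk, d⟫ + L_f / 2 * (η ^ 2 * ‖d‖ ^ 2) := by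
          rw [Real.norm_eq_abs, mul_pow, sq_abs]
  -- descent for envelope
  have h2 : env1 ≤ env + η * ⟪u, A d⟫ + η ^ 2 * (‖A‖ ^ 2 * ‖d‖ ^ 2) / (2 * β) := by
    have := moreau_smooth g β hβ (A xk) q hq (A xk1) q2 hq2
    have e1 : A xk1 - A xk = η • (A d) := by
      rw [hxk1]; rw [map_add, map_smul]; abel
    rw [e1, real_inner_smul_right] at this
    have e2 : ‖η • (A d)‖ ^ 2 ≤ η ^ 2 * (‖A‖ ^ 2 * ‖d‖ ^ 2) := by
      rw [norm_smul, mul_pow, Real.norm_eq_abs, sq_abs]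
      have h3 : ‖A d‖ ≤ ‖A‖ * ‖d‖ := A.le_opNorm d
      have h4 : ‖A d‖ ^ 2 ≤ (‖A‖ * ‖d‖) ^ 2 := by
        apply pow_le_pow_left₀ (norm_nonneg _) h3
      nlinarith [sq_nonneg η]
    have e3 : ‖η • (A d)‖ ^ 2 / (2 * β) ≤ η ^ 2 * (‖A‖ ^ 2 * ‖d‖ ^ 2) / (2 * β) := by
      apply div_le_div_of_nonneg_right e2 (by linarith) |>.trans_eq rfl
    linarith [this, e3]
  -- inner product rearrangement with v
  have hv : ∀ w : E, ⟪β • f' xk + (ContinuousLinearMap.adjoint A) (A xk - q), w⟫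
      = β * (⟪f' xk, w⟫ + ⟪u, A w⟫) := by
    intro w
    rw [inner_add_left, real_inner_smul_left, ContinuousLinearMap.adjoint_inner_left]
    rw [hu, real_inner_smul_left]
    field_simp
  -- LMO gives
  have h4 : ⟪f' xk, d⟫ + ⟪u, A d⟫
      ≤ (⟪f' xk, xstar - xk⟫ + ⟪u, A (xstar - xk)⟫) + δ * (η / 2) * D ^ 2 * L := by
    have h5 : β * (⟪f' xk, sk⟫ + ⟪u, A sk⟫)
        ≤ β * (⟪f' xk, xstar⟫ + ⟪u, A xstar⟫) + δ * (η * β / 2) * D ^ 2 * L := by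
      rw [← hv, ← hv]; exact hlmo
    have h6 : ⟪f' xk, sk⟫ + ⟪u, A sk⟫
        ≤ ⟪f' xk, xstar⟫ + ⟪u, A xstar⟫ + δ * (η / 2) * D ^ 2 * L := by
      have hβ' : β ≠ 0 := ne_of_gt hβ
      have := (mul_le_mul_iff_right₀ hβ).mp (by linarith [h5] :
        β * (⟪f' xk, sk⟫ + ⟪u, A sk⟫)
          ≤ β * (⟪f' xk, xstar⟫ + ⟪u, A xstar⟫ + δ * (η / 2) * D ^ 2 * L))
      exact this
    have e1 : ⟪f' xk, d⟫ = ⟪f' xk, sk⟫ - ⟪f' xk, xk⟫ := by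
      rw [hd, inner_sub_right]
    have e2 : ⟪u, A d⟫ = ⟪u, A sk⟫ - ⟪u, A xk⟫ := by
      rw [hd, map_sub, inner_sub_right]
    have e3 : ⟪f' xk, xstar - xk⟫ = ⟪f' xk, xstar⟫ - ⟪f' xk, xk⟫ := by
      rw [inner_sub_right]
    have e4 : ⟪u, A (xstar - xk)⟫ = ⟪u, A xstar⟫ - ⟪u, A xk⟫ := by
      rw [map_sub, inner_sub_right]
    linarith
  -- convexity bounds at xstar
  have h7 : ⟪f' xk, xstar - xk⟫ ≤ f xstar - f xk :=
    by linarith [cvx_grad_ineq f hf_cvx xk xstar (f' xk) (hf_grad xk)]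
  have h8 : ⟪u, A (xstar - xk)⟫ ≤ g (A xstar) - env - β * ‖u‖ ^ 2 / 2 := by
    have hsc := moreau_strong_cvx g β hβ (A xk) q hq hg_cvx (A xstar)
    rw [← hu] at hsc
    have e2 : env = g q + ‖A xk - q‖ ^ 2 / (2 * β) := moreau_eq g β (A xk) q hq
    have e3 : ‖A xk - q‖ ^ 2 / (2 * β) = β * ‖u‖ ^ 2 / 2 := by
      rw [hu, norm_smul, Real.norm_eq_abs, abs_of_pos (inv_pos.mpr hβ), mul_pow]
      field_simp
    rw [map_sub]
    linarith [hsc, e2, e3]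
  -- assemble
  have hd2 : ‖d‖ ^ 2 ≤ D ^ 2 := by
    apply pow_le_pow_left₀ (norm_nonneg _) hns
  have hLsplit : L_f / 2 * (η ^ 2 * ‖d‖ ^ 2) + η ^ 2 * (‖A‖ ^ 2 * ‖d‖ ^ 2) / (2 * β)
      ≤ η ^ 2 * D ^ 2 * L / 2 := by
    rw [hL]
    have hA2 : 0 ≤ ‖A‖ ^ 2 / β := by positivity
    have k1 : L_f / 2 * (η ^ 2 * ‖d‖ ^ 2) ≤ L_f / 2 * (η ^ 2 * D ^ 2) := by
      apply mul_le_mul_of_nonneg_left _ (by linarith)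
      nlinarith [sq_nonneg η]
    have k2 : η ^ 2 * (‖A‖ ^ 2 * ‖d‖ ^ 2) / (2 * β) ≤ η ^ 2 * (‖A‖ ^ 2 * D ^ 2) / (2 * β) := by
      apply div_le_div_of_nonneg_right _ (by linarith)
      exact mul_le_mul_of_nonneg_left
        (mul_le_mul_of_nonneg_left hd2 (sq_nonneg ‖A‖)) (sq_nonneg η)
    have k3 : η ^ 2 * (‖A‖ ^ 2 * D ^ 2) / (2 * β) = η ^ 2 * D ^ 2 * (‖A‖ ^ 2 / β) / 2 := by
      field_simp
    nlinarith [k1, k2]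
  have hδη : δ * (η / 2) * D ^ 2 * L ≤ δ * η ^ 2 * D ^ 2 * L / 2 → True := fun _ => trivial
  -- combine: f xk1 + env1 ≤ f xk + env + η*(f xstar - f xk + g(A xstar) - env - β‖u‖²/2)
  --            + η²D²L/2 + η*δ*(η/2)*D²*L
  have final : f xk1 + env1 - (f xstar + g (A xstar))
      ≤ (1 - η) * (f xk + env - (f xstar + g (A xstar)))
        - η * β * ‖u‖ ^ 2 / 2 + η ^ 2 * D ^ 2 * L * (1 + δ) / 2 := by
    have m1 : η * (⟪f' xk, d⟫ + ⟪u, A d⟫)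
        ≤ η * ((f xstar - f xk) + (g (A xstar) - env - β * ‖u‖ ^ 2 / 2)
            + δ * (η / 2) * D ^ 2 * L) := by
      apply mul_le_mul_of_nonneg_left _ hη
      linarith [h4, h7, h8]
    have m2 : η * (δ * (η / 2) * D ^ 2 * L) = η ^ 2 * D ^ 2 * L * δ / 2 := by ring
    nlinarith [h1, h2, m1, hLsplit]
  exact final
end Step

-- arithmetic lemmas
lemma arith_base (C L_f M β₀ s : ℝ) (hC : 0 ≤ C) (hLf : 0 ≤ L_f) (hM : 0 ≤ M)
    (hβ₀ : 0 < β₀) (hs0 : 0 < s) (hs : s ^ 2 = 2) :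
    C * (L_f + M / (β₀ / s)) / 2 ≤ 2 * C * (L_f / 2 + M / (β₀ * s)) := by
  have hD : 0 < β₀ * s := by positivity
  have e1 : C * (L_f + M / (β₀ / s)) / 2 * (β₀ * s) = C * (L_f * β₀ * s + M * s ^ 2) / 2 := by
    field_simp
  have e2 : (2 * C * (L_f / 2 + M / (β₀ * s))) * (β₀ * s) = C * L_f * β₀ * s + 2 * C * M := by
    field_simp
  have key : C * (L_f * β₀ * s + M * s ^ 2) / 2 ≤ C * L_f * β₀ * s + 2 * C * M := by
    rw [hs]
    nlinarith [mul_nonneg hC hM, mul_nonneg (mul_nonneg (mul_nonneg hC hLf) (le_of_lt hβ₀)) (le_of_lt hs0)]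
  rw [← e1, ← e2] at key
  exact le_of_mul_le_mul_right key hD

lemma arith_coeff (k s t β₀ : ℝ) (hk : 1 ≤ k) (hβ₀ : 0 < β₀) (hs0 : 0 < s) (ht0 : 0 < t)
    (hst : s ≤ t) (hs : s ^ 2 = k + 1) (ht : t ^ 2 = k + 2) :
    (1 - 2 / (k + 2)) * (β₀ / s - β₀ / t) ≤ (2 / (k + 2)) * (β₀ / t) := by
  have hD : 0 < (k + 2) * s * t / β₀ := by positivity
  have e1 : (1 - 2 / (k + 2)) * (β₀ / s - β₀ / t) * ((k + 2) * s * t / β₀) = k * (t - s) := by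
    field_simp; ring
  have e2 : (2 / (k + 2)) * (β₀ / t) * ((k + 2) * s * t / β₀) = 2 * s := by
    field_simp
  have hkt : k * t ≤ (k + 2) * s := by
    nlinarith [hs, ht, mul_pos hs0 ht0, sq_nonneg (k * t - (k + 2) * s),
      mul_pos (mul_pos hs0 hs0) ht0, sq_nonneg (s - t), sq_nonneg (s * t - s * s)]
  have key : k * (t - s) ≤ 2 * s := by nlinarith [hkt]
  rw [← e1, ← e2] at key
  exact le_of_mul_le_mul_right key hD

lemma arith_main (k s t β₀ L_f M C : ℝ) (hk : 1 ≤ k) (hβ₀ : 0 < β₀) (hLf : 0 ≤ L_f)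
    (hM : 0 ≤ M) (hC : 0 ≤ C) (hs0 : 0 < s) (ht0 : 0 < t) (hst : s ≤ t)
    (hs : s ^ 2 = k + 1) (ht : t ^ 2 = k + 2) :
    (1 - 2 / (k + 2)) * (2 * C * (L_f / (k + 1) + M / (β₀ * s)))
        + (2 / (k + 2)) ^ 2 * C * (L_f + M / (β₀ / t)) * 1 / 2
      ≤ 2 * C * (L_f / (k + 2) + M / (β₀ * t)) := by
  have hk1 : (0:ℝ) < k + 1 := by linarith
  have hk2 : (0:ℝ) < k + 2 := by linarith
  have hD : 0 < (k + 1) * (k + 2) ^ 2 * β₀ * s * t := by positivity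
  have e1 : ((1 - 2 / (k + 2)) * (2 * C * (L_f / (k + 1) + M / (β₀ * s)))
        + (2 / (k + 2)) ^ 2 * C * (L_f + M / (β₀ / t)) * 1 / 2) * ((k + 1) * (k + 2) ^ 2 * β₀ * s * t)
      = 2 * C * L_f * β₀ * s * t * (k * (k + 2) + (k + 1))
        + 2 * C * M * t * (k * (k + 1) * (k + 2)) + 2 * C * M * (k + 1) * s * t ^ 2 := by
    field_simp; ring
  have e2 : (2 * C * (L_f / (k + 2) + M / (β₀ * t))) * ((k + 1) * (k + 2) ^ 2 * β₀ * s * t)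
      = 2 * C * L_f * β₀ * s * t * ((k + 1) * (k + 2)) + 2 * C * M * (k + 1) * (k + 2) ^ 2 * s := by
    field_simp
  have hkt : k * t ≤ (k + 1) * s := by
    nlinarith [hs, ht, mul_pos hs0 ht0, sq_nonneg (k * t - (k + 1) * s),
      mul_pos (mul_pos hs0 hs0) ht0]
  have key : 2 * C * L_f * β₀ * s * t * (k * (k + 2) + (k + 1))
        + 2 * C * M * t * (k * (k + 1) * (k + 2)) + 2 * C * M * (k + 1) * s * t ^ 2
      ≤ 2 * C * L_f * β₀ * s * t * ((k + 1) * (k + 2)) + 2 * C * M * (k + 1) * (k + 2) ^ 2 * s := by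
    have c1 : 0 ≤ 2 * C * L_f * β₀ * s * t := by positivity
    have c2 : 0 ≤ 2 * C * M := by positivity
    have hLfpart : k * (k + 2) + (k + 1) ≤ (k + 1) * (k + 2) := by nlinarith
    have hMpart : t * (k * (k + 1) * (k + 2)) + (k + 1) * s * t ^ 2
        ≤ (k + 1) * (k + 2) ^ 2 * s := by
      rw [ht]
      have h9 : (0:ℝ) ≤ (k + 1) * (k + 2) := by nlinarith
      nlinarith [mul_le_mul_of_nonneg_left hkt h9]
    nlinarith [mul_le_mul_of_nonneg_left hLfpart c1, mul_le_mul_of_nonneg_left hMpart c2]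
  rw [← e1, ← e2] at key
  exact le_of_mul_le_mul_right key hD
theorem stmt4
    (n d : ℕ)
    (X : Set (EuclideanSpace ℝ (Fin n)))
    (hX_ne : X.Nonempty) (hX_cpt : IsCompact X) (hX_cvx : Convex ℝ X)
    (f : EuclideanSpace ℝ (Fin n) → ℝ)
    (f' : EuclideanSpace ℝ (Fin n) → EuclideanSpace ℝ (Fin n))
    (hf_cvx : ConvexOn ℝ Set.univ f)
    (hf_grad : ∀ x, HasGradientAt f (f' x) x)
    (L_f : ℝ) (hLf : 0 ≤ L_f)
    (hf'_lip : ∀ x y, ‖f' x - f' y‖ ≤ L_f * ‖x - y‖)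
    (A : EuclideanSpace ℝ (Fin n) →L[ℝ] EuclideanSpace ℝ (Fin d))
    (g : EuclideanSpace ℝ (Fin d) → ℝ)
    (hg_cvx : ConvexOn ℝ Set.univ g)
    (L_g : ℝ) (hLg : 0 < L_g)
    (hg_lip : ∀ z₁ z₂, |g z₁ - g z₂| ≤ L_g * ‖z₁ - z₂‖)
    (prox : ℝ → EuclideanSpace ℝ (Fin d) → EuclideanSpace ℝ (Fin d))
    (hprox : ∀ β, 0 < β → ∀ z y, g (prox β z) + ‖z - prox β z‖ ^ 2 / (2 * β)
        ≤ g y + ‖z - y‖ ^ 2 / (2 * β))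
    (gβ : ℝ → EuclideanSpace ℝ (Fin d) → ℝ)
    (hgβ : ∀ β z, gβ β z = ⨅ y : EuclideanSpace ℝ (Fin d), (g y + ‖z - y‖ ^ 2 / (2 * β)))
    (Fstar : ℝ)
    (hFstar : IsLeast ((fun x => f x + g (A x)) '' X) Fstar)
    (β₀ : ℝ) (hβ₀ : 0 < β₀)
    (δ : ℝ) (hδ : 0 ≤ δ)
    (x s v : ℕ → EuclideanSpace ℝ (Fin n))
    (hx1 : x 1 ∈ X)
    (hv : ∀ k, 1 ≤ k → v k = (β₀ / Real.sqrt ((k:ℝ) + 1)) • f' (x k)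
        + (ContinuousLinearMap.adjoint A) (A (x k) - prox (β₀ / Real.sqrt ((k:ℝ) + 1)) (A (x k))))
    (hs_mem : ∀ k, 1 ≤ k → s k ∈ X)
    (hlmo : ∀ k, 1 ≤ k → ∀ z ∈ X, ⟪v k, s k⟫ ≤ ⟪v k, z⟫
      + δ * ((2 / ((k:ℝ) + 1)) * (β₀ / Real.sqrt ((k:ℝ) + 1)) / 2) * (Metric.diam X) ^ 2
          * (L_f + ‖A‖ ^ 2 / (β₀ / Real.sqrt ((k:ℝ) + 1))))
    (hupd : ∀ k, 1 ≤ k → x (k + 1) = x k + (2 / ((k:ℝ) + 1)) • (s k - x k)) :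
    ∀ k, 1 ≤ k →
      f (x (k + 1)) + gβ (β₀ / Real.sqrt ((k:ℝ) + 1)) (A (x (k + 1))) - Fstar
        ≤ 2 * (Metric.diam X) ^ 2
            * (L_f / ((k:ℝ) + 1) + ‖A‖ ^ 2 / (β₀ * Real.sqrt ((k:ℝ) + 1))) * (1 + δ) := by
  obtain ⟨xstar, hxstar_mem, hxstar_val⟩ := hFstar.1
  have hD0 : (0:ℝ) ≤ Metric.diam X := Metric.diam_nonneg
  have hdiam : ∀ a ∈ X, ∀ b ∈ X, ‖a - b‖ ≤ Metric.diam X := by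
    intro a ha b hb
    rw [← dist_eq_norm]
    exact Metric.dist_le_diam_of_mem hX_cpt.isBounded ha hb
  have hsqpos : ∀ r : ℝ, 0 < r → 0 < Real.sqrt r := fun r hr => Real.sqrt_pos.mpr hr
  have hβpos : ∀ m : ℕ, 0 < β₀ / Real.sqrt ((m:ℝ) + 1) :=
    fun m => div_pos hβ₀ (hsqpos _ (by positivity))
  have hβpos' : ∀ m : ℕ, 0 < β₀ / Real.sqrt ((m:ℝ) + 2) :=
    fun m => div_pos hβ₀ (hsqpos _ (by positivity))
  have hxmem : ∀ m : ℕ, 1 ≤ m → x m ∈ X := by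
    intro m hm
    induction m with
    | zero => omega
    | succ p ih =>
      by_cases hp : 1 ≤ p
      · have hxp := ih hp
        have hsp := hs_mem p hp
        have hp1 : (1:ℝ) ≤ (p:ℝ) := by exact_mod_cast hp
        have hηp0 : (0:ℝ) ≤ 2 / ((p:ℝ) + 1) := by positivity
        have hηp1 : 2 / ((p:ℝ) + 1) ≤ 1 := by
          rw [div_le_one (by positivity)]; linarith
        have hmem := hX_cvx hxp hsp (show (0:ℝ) ≤ 1 - 2 / ((p:ℝ)+1) by linarith) hηp0
          (by ring)
        have he : (1 - 2 / ((p:ℝ)+1)) • x p + (2 / ((p:ℝ)+1)) • s p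
            = x p + (2 / ((p:ℝ)+1)) • (s p - x p) := by module
        rw [he] at hmem
        rw [hupd p hp]
        exact hmem
      · have hp0 : p = 0 := by omega
        rw [hp0]
        exact hx1
  -- one-step inequality
  have hstep : ∀ m : ℕ, 1 ≤ m →
      f (x (m+1)) + (⨅ y : EuclideanSpace ℝ (Fin d),
          (g y + ‖A (x (m+1)) - y‖ ^ 2 / (2 * (β₀ / Real.sqrt ((m:ℝ)+1))))) - Fstar
        ≤ (1 - 2/((m:ℝ)+1)) * (f (x m) + (⨅ y : EuclideanSpace ℝ (Fin d),
              (g y + ‖A (x m) - y‖ ^ 2 / (2 * (β₀ / Real.sqrt ((m:ℝ)+1))))) - Fstar)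
          - 2/((m:ℝ)+1) * (β₀ / Real.sqrt ((m:ℝ)+1))
              * ‖(β₀ / Real.sqrt ((m:ℝ)+1))⁻¹
                  • (A (x m) - prox (β₀ / Real.sqrt ((m:ℝ)+1)) (A (x m)))‖ ^ 2 / 2
          + (2/((m:ℝ)+1)) ^ 2 * Metric.diam X ^ 2
              * (L_f + ‖A‖ ^ 2 / (β₀ / Real.sqrt ((m:ℝ)+1))) * (1 + δ) / 2 := by
    intro m hm
    have hm1 : (1:ℝ) ≤ (m:ℝ) := by exact_mod_cast hm
    have hη0 : (0:ℝ) ≤ 2/((m:ℝ)+1) := by positivity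
    have hη1 : 2/((m:ℝ)+1) ≤ 1 := by
      rw [div_le_one (by positivity)]; linarith
    have hns : ‖s m - x m‖ ≤ Metric.diam X := hdiam _ (hs_mem m hm) _ (hxmem m hm)
    have hnstar : ‖xstar - x m‖ ≤ Metric.diam X := hdiam _ hxstar_mem _ (hxmem m hm)
    have hlmo' := hlmo m hm xstar hxstar_mem
    rw [hv m hm] at hlmo'
    have H := cgm_step f f' hf_cvx hf_grad L_f hLf hf'_lip A g hg_cvx
      (β₀ / Real.sqrt ((m:ℝ)+1)) (2/((m:ℝ)+1)) δ (Metric.diam X)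
      (hβpos m) hη0 hη1 hδ hD0
      (x m) (s m) xstar
      (prox (β₀ / Real.sqrt ((m:ℝ)+1)) (A (x m)))
      (prox (β₀ / Real.sqrt ((m:ℝ)+1)) (A (x m + (2/((m:ℝ)+1)) • (s m - x m))))
      (fun y => hprox _ (hβpos m) (A (x m)) y)
      (fun y => hprox _ (hβpos m) (A (x m + (2/((m:ℝ)+1)) • (s m - x m))) y)
      hns hnstar hlmo'
    have hxv : f xstar + g (A xstar) = Fstar := hxstar_val
    rw [← hupd m hm, hxv] at H
    exact H
  -- envelope comparison between consecutive smoothing parameters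
  have hshift : ∀ m : ℕ, 1 ≤ m →
      (⨅ y : EuclideanSpace ℝ (Fin d),
          (g y + ‖A (x (m+1)) - y‖ ^ 2 / (2 * (β₀ / Real.sqrt ((m:ℝ)+2)))))
        ≤ (⨅ y : EuclideanSpace ℝ (Fin d),
            (g y + ‖A (x (m+1)) - y‖ ^ 2 / (2 * (β₀ / Real.sqrt ((m:ℝ)+1)))))
          + (β₀ / Real.sqrt ((m:ℝ)+1) - β₀ / Real.sqrt ((m:ℝ)+2)) / 2
            * ‖(β₀ / Real.sqrt ((m:ℝ)+2))⁻¹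
                • (A (x (m+1)) - prox (β₀ / Real.sqrt ((m:ℝ)+2)) (A (x (m+1))))‖ ^ 2 := by
    intro m hm
    have hγβ : β₀ / Real.sqrt ((m:ℝ)+2) ≤ β₀ / Real.sqrt ((m:ℝ)+1) := by
      have h1 : Real.sqrt ((m:ℝ)+1) ≤ Real.sqrt ((m:ℝ)+2) := Real.sqrt_le_sqrt (by linarith)
      gcongr <;> first
        | exact le_of_lt hβ₀
        | exact hsqpos _ (by positivity)
        | exact h1
    exact moreau_beta_le g hg_cvx (β₀ / Real.sqrt ((m:ℝ)+2)) (β₀ / Real.sqrt ((m:ℝ)+1))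
      (hβpos' m) hγβ (A (x (m+1)))
      (prox (β₀ / Real.sqrt ((m:ℝ)+2)) (A (x (m+1))))
      (prox (β₀ / Real.sqrt ((m:ℝ)+1)) (A (x (m+1))))
      (fun y => hprox _ (hβpos' m) (A (x (m+1))) y)
      (fun y => hprox _ (hβpos m) (A (x (m+1))) y)
  intro k hk
  induction k, hk using Nat.le_induction with
  | base =>
    simp only [hgβ]
    have e1 : ((1:ℕ):ℝ) + 1 = 2 := by norm_num
    have H := hstep 1 le_rfl
    simp only [e1] at H ⊢
    norm_num at H ⊢
    have hs0 : (0:ℝ) < Real.sqrt 2 := hsqpos 2 (by norm_num)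
    have hs2 : Real.sqrt 2 ^ 2 = 2 := Real.sq_sqrt (by norm_num)
    have hC0 : (0:ℝ) ≤ Metric.diam X ^ 2 * (1 + δ) :=
      mul_nonneg (by positivity) (by linarith)
    have hU : (0:ℝ) ≤ β₀ / Real.sqrt 2
        * ‖(Real.sqrt 2 / β₀) • (A (x 1) - prox (β₀ / Real.sqrt 2) (A (x 1)))‖ ^ 2 / 2 := by
      positivity
    have hb := arith_base (Metric.diam X ^ 2 * (1 + δ)) L_f (‖A‖ ^ 2) β₀ (Real.sqrt 2)
      hC0 hLf (by positivity) hβ₀ hs0 hs2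
    have eb1 : Metric.diam X ^ 2 * (L_f + ‖A‖ ^ 2 / (β₀ / Real.sqrt 2)) * (1 + δ) / 2
        = Metric.diam X ^ 2 * (1 + δ) * (L_f + ‖A‖ ^ 2 / (β₀ / Real.sqrt 2)) / 2 := by ring
    have eb2 : 2 * Metric.diam X ^ 2 * (L_f / 2 + ‖A‖ ^ 2 / (β₀ * Real.sqrt 2)) * (1 + δ)
        = 2 * (Metric.diam X ^ 2 * (1 + δ)) * (L_f / 2 + ‖A‖ ^ 2 / (β₀ * Real.sqrt 2)) := by ring
    linarith [H, hU, hb, eb1, eb2]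
  | succ k hk ih =>
    simp only [hgβ] at ih ⊢
    have e2 : ((k+1:ℕ):ℝ) + 1 = (k:ℝ) + 2 := by push_cast; ring
    have H := hstep (k+1) (by omega)
    simp only [e2] at H ⊢
    have S := hshift k hk
    have hk1 : (1:ℝ) ≤ (k:ℝ) := by exact_mod_cast hk
    set sq1 := Real.sqrt ((k:ℝ)+1) with hsq1
    set sq2 := Real.sqrt ((k:ℝ)+2) with hsq2
    have hs0 : 0 < sq1 := hsqpos _ (by positivity)
    have ht0 : 0 < sq2 := hsqpos _ (by positivity)
    have hs2 : sq1 ^ 2 = (k:ℝ) + 1 := Real.sq_sqrt (by positivity)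
    have ht2 : sq2 ^ 2 = (k:ℝ) + 2 := Real.sq_sqrt (by positivity)
    have hst : sq1 ≤ sq2 := Real.sqrt_le_sqrt (by linarith)
    set U := ‖(β₀ / sq2)⁻¹ • (A (x (k+1)) - prox (β₀ / sq2) (A (x (k+1))))‖ ^ 2 with hUdef
    have hU0 : 0 ≤ U := sq_nonneg _
    have hη' : (0:ℝ) ≤ 1 - 2 / ((k:ℝ)+2) := by
      have : 2 / ((k:ℝ)+2) ≤ 1 := by rw [div_le_one (by positivity)]; linarith
      linarith
    have coeff := arith_coeff (k:ℝ) sq1 sq2 β₀ hk1 hβ₀ hs0 ht0 hst hs2 ht2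
    have hC0 : (0:ℝ) ≤ Metric.diam X ^ 2 * (1 + δ) :=
      mul_nonneg (by positivity) (by linarith)
    have am := arith_main (k:ℝ) sq1 sq2 β₀ L_f (‖A‖ ^ 2) (Metric.diam X ^ 2 * (1 + δ))
      hk1 hβ₀ hLf (by positivity) hC0 hs0 ht0 hst hs2 ht2
    -- combination
    have m1 : (1 - 2/((k:ℝ)+2)) * (f (x (k+1)) + (⨅ y : EuclideanSpace ℝ (Fin d),
          (g y + ‖A (x (k+1)) - y‖ ^ 2 / (2 * (β₀ / sq2)))) - Fstar)
        ≤ (1 - 2/((k:ℝ)+2)) * ((f (x (k+1)) + (⨅ y : EuclideanSpace ℝ (Fin d),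
            (g y + ‖A (x (k+1)) - y‖ ^ 2 / (2 * (β₀ / sq1)))) - Fstar)
          + (β₀ / sq1 - β₀ / sq2) / 2 * U) :=
      mul_le_mul_of_nonneg_left (by linarith [S]) hη'
    have em1 : (1 - 2/((k:ℝ)+2)) * ((f (x (k+1)) + (⨅ y : EuclideanSpace ℝ (Fin d),
            (g y + ‖A (x (k+1)) - y‖ ^ 2 / (2 * (β₀ / sq1)))) - Fstar)
          + (β₀ / sq1 - β₀ / sq2) / 2 * U)
        = (1 - 2/((k:ℝ)+2)) * (f (x (k+1)) + (⨅ y : EuclideanSpace ℝ (Fin d),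
            (g y + ‖A (x (k+1)) - y‖ ^ 2 / (2 * (β₀ / sq1)))) - Fstar)
          + (1 - 2/((k:ℝ)+2)) * ((β₀ / sq1 - β₀ / sq2) / 2 * U) := by ring
    have m2 : (1 - 2/((k:ℝ)+2)) * ((β₀ / sq1 - β₀ / sq2) / 2 * U)
        ≤ 2/((k:ℝ)+2) * (β₀ / sq2) * U / 2 := by
      have h := mul_le_mul_of_nonneg_right coeff hU0
      nlinarith [h]
    have m3 : (1 - 2/((k:ℝ)+2)) * (f (x (k+1)) + (⨅ y : EuclideanSpace ℝ (Fin d),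
          (g y + ‖A (x (k+1)) - y‖ ^ 2 / (2 * (β₀ / sq1)))) - Fstar)
        ≤ (1 - 2/((k:ℝ)+2)) * (2 * Metric.diam X ^ 2
            * (L_f / ((k:ℝ)+1) + ‖A‖ ^ 2 / (β₀ * sq1)) * (1 + δ)) :=
      mul_le_mul_of_nonneg_left ih hη'
    have eA : (1 - 2/((k:ℝ)+2)) * (2 * Metric.diam X ^ 2
            * (L_f / ((k:ℝ)+1) + ‖A‖ ^ 2 / (β₀ * sq1)) * (1 + δ))
        = (1 - 2/((k:ℝ)+2)) * (2 * (Metric.diam X ^ 2 * (1 + δ))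
            * (L_f / ((k:ℝ)+1) + ‖A‖ ^ 2 / (β₀ * sq1))) := by ring
    have eB : (2/((k:ℝ)+2)) ^ 2 * Metric.diam X ^ 2
            * (L_f + ‖A‖ ^ 2 / (β₀ / sq2)) * (1 + δ) / 2
        = (2/((k:ℝ)+2)) ^ 2 * (Metric.diam X ^ 2 * (1 + δ))
            * (L_f + ‖A‖ ^ 2 / (β₀ / sq2)) * 1 / 2 := by ring
    have eC : 2 * Metric.diam X ^ 2 * (L_f / ((k:ℝ)+2) + ‖A‖ ^ 2 / (β₀ * sq2)) * (1 + δ)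
        = 2 * (Metric.diam X ^ 2 * (1 + δ)) * (L_f / ((k:ℝ)+2) + ‖A‖ ^ 2 / (β₀ * sq2)) := by
      ring
    linarith [H, m1, em1, m2, m3, am, eA, eB, eC]
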